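/- In the theory T_H, the membership characterizations of H⁺ and H⁻ are provable: T_H semantically entails ∀x(x∈H⁺ ↔ (x∈x ∨ x=H⁺)) and T_H semantically entails ∀x(x∈H⁻ ↔ (x∈x ∧ x≠H⁻)). -/
import Mathlib


open FirstOrder FirstOrder.Language

namespace CoRussellParadox

/-- The language `L'` with a single binary relation symbol `∈` and four constant
symbols `A`, `B`, `H⁺`, `H⁻` (coded as `Fin 4`). -/
def L : Language :=
  ⟨fun n => match n with | 0 => Fin 4 | _ => Empty,
   fun n => match n with | 2 => Unit | _ => Empty⟩

/-- The membership relation symbol. -/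
def memRel : L.Relations 2 := Unit.unit

/-- The constant symbol `A`. -/
def cA : L.Constants := (0 : Fin 4)
/-- The constant symbol `B`. -/
def cB : L.Constants := (1 : Fin 4)
/-- The constant symbol `H⁺`. -/
def cHp : L.Constants := (2 : Fin 4)
/-- The constant symbol `H⁻`. -/
def cHm : L.Constants := (3 : Fin 4)

/-- `memF t₁ t₂` is the atomic formula `t₁ ∈ t₂`. -/
def memF {n : ℕ} (t₁ t₂ : L.Term (Empty ⊕ Fin n)) : L.BoundedFormula Empty n :=
  memRel.boundedFormula₂ t₁ t₂

/-- Inclusion of a term in context `n` into the larger context `n + k`. -/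
def tl {n : ℕ} (k : ℕ) (t : L.Term (Empty ⊕ Fin n)) : L.Term (Empty ⊕ Fin (n + k)) :=
  t.relabel (Sum.map id (Fin.castAdd k))

/-- `z = ⟨a,b⟩` (Kuratowski pair), as the formula
`∃p∃q(∀x(x∈p ↔ x=a) ∧ ∀x(x∈q ↔ (x=a ∨ x=b)) ∧ ∀x(x∈z ↔ (x=p ∨ x=q)))`. -/
def isPairF {n : ℕ} (z a b : L.Term (Empty ⊕ Fin n)) : L.BoundedFormula Empty n :=
  ∃' ∃' (
    (∀' (memF (&⟨n + 2, by omega⟩) (&⟨n, by omega⟩) ⇔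
        ((&(⟨n + 2, by omega⟩ : Fin (n + 3))) =' tl 3 a))) ⊓
    (∀' (memF (&⟨n + 2, by omega⟩) (&⟨n + 1, by omega⟩) ⇔
        (((&(⟨n + 2, by omega⟩ : Fin (n + 3))) =' tl 3 a) ⊔
         ((&(⟨n + 2, by omega⟩ : Fin (n + 3))) =' tl 3 b)))) ⊓
    (∀' (memF (&⟨n + 2, by omega⟩) (tl 3 z) ⇔
        (((&(⟨n + 2, by omega⟩ : Fin (n + 3))) =' (&⟨n, by omega⟩)) ⊔
         ((&(⟨n + 2, by omega⟩ : Fin (n + 3))) =' (&⟨n + 1, by omega⟩))))))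

/-- Extensionality: `∀y∀z(∀x(x∈y ↔ x∈z) → y=z)`. -/
def extAx : L.Sentence :=
  ∀' ∀' ((∀' (memF (&2) (&0) ⇔ memF (&2) (&1))) ⟹ ((&0) =' (&1)))

/-- Pairing: `∀a∀b∃y∀x(x∈y ↔ (x=a ∨ x=b))`. -/
def pairAx : L.Sentence :=
  ∀' ∀' ∃' ∀' (memF (&3) (&2) ⇔ (((&3) =' (&0)) ⊔ ((&3) =' (&1))))

/-- Extracting: `∀a∃y∀x(x∈y ↔ ∃z(z=⟨a,x⟩ ∧ z∈a))`. -/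
def extractAx : L.Sentence :=
  ∀' ∃' ∀' (memF (&2) (&1) ⇔ ∃' (isPairF (&3) (&0) (&2) ⊓ memF (&3) (&0)))

/-- `w = v[v]`, i.e. `∀u(u∈w ↔ ∃z(z=⟨v,u⟩ ∧ z∈v))`, here with `v = &1`, `w = &2`
in context `3` (as used in the axioms for `A` and `B`). -/
def wEqExtractF : L.BoundedFormula Empty 3 :=
  ∀' (memF (&3) (&2) ⇔ ∃' (isPairF (&4) (&1) (&3) ⊓ memF (&4) (&1)))

/-- The axiom `∀x(x∈A ↔ ∃v∃w(x=⟨v,w⟩ ∧ (w∈w ∨ w=v[v])))`. -/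
def axA : L.Sentence :=
  ∀' (memF (&0) (Constants.term cA) ⇔
    ∃' ∃' (isPairF (&0) (&1) (&2) ⊓ (memF (&2) (&2) ⊔ wEqExtractF)))

/-- The axiom `∀x(x∈B ↔ ∃v∃w(x=⟨v,w⟩ ∧ (w∈w ∧ ¬w=v[v])))`. -/
def axB : L.Sentence :=
  ∀' (memF (&0) (Constants.term cB) ⇔
    ∃' ∃' (isPairF (&0) (&1) (&2) ⊓ (memF (&2) (&2) ⊓ ∼wEqExtractF)))

/-- The axiom `∀x(x∈H⁺ ↔ ∃z(z=⟨A,x⟩ ∧ z∈A))`. -/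
def axHp : L.Sentence :=
  ∀' (memF (&0) (Constants.term cHp) ⇔
    ∃' (isPairF (&1) (Constants.term cA) (&0) ⊓ memF (&1) (Constants.term cA)))

/-- The axiom `∀x(x∈H⁻ ↔ ∃z(z=⟨B,x⟩ ∧ z∈B))`. -/
def axHm : L.Sentence :=
  ∀' (memF (&0) (Constants.term cHm) ⇔
    ∃' (isPairF (&1) (Constants.term cB) (&0) ⊓ memF (&1) (Constants.term cB)))

/-- The theory `T_H`: extensionality, pairing, extracting, and the defining axioms
of `A`, `B`, `H⁺` and `H⁻`. -/
def TH : L.Theory := {extAx, pairAx, extractAx, axA, axB, axHp, axHm}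

section Abstract

variable {M : Type*} (mem : M → M → Prop)

/-- Kuratowski pair predicate over an abstract membership relation. -/
def KP (z a b : M) : Prop :=
  ∃ p q, ((∀ x, mem x p ↔ x = a) ∧ (∀ x, mem x q ↔ x = a ∨ x = b)) ∧
    (∀ x, mem x z ↔ x = p ∨ x = q)

/-- `w = v[v]` over an abstract membership relation. -/
def EqExt (w v : M) : Prop :=
  ∀ u, mem u w ↔ ∃ z, KP mem z v u ∧ mem z v

variable {mem}

theorem KP_inj {z a b a' b' : M} (h1 : KP mem z a b) (h2 : KP mem z a' b') :
    a = a' ∧ b = b' := by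
  obtain ⟨p, q, ⟨hp, hq⟩, hz⟩ := h1
  obtain ⟨p', q', ⟨hp', hq'⟩, hz'⟩ := h2
  have key : ∀ x, (x = p ∨ x = q) ↔ (x = p' ∨ x = q') :=
    fun x => (hz x).symm.trans (hz' x)
  rcases (key p).mp (Or.inl rfl) with hpp | hpq
  · have haa : a = a' := (hp' a).mp (by rw [← hpp]; exact (hp a).mpr rfl)
    rcases (key q).mp (Or.inr rfl) with hqp | hqq
    · have hba' : b = a' := (hp' b).mp (by rw [← hqp]; exact (hq b).mpr (Or.inr rfl))
      rcases (key q').mpr (Or.inr rfl) with h | h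
      · have hb'a : b' = a := (hp b').mp (by rw [← h]; exact (hq' b').mpr (Or.inr rfl))
        exact ⟨haa, by rw [hba', ← haa, hb'a]⟩
      · have hb' : b' = a ∨ b' = b := (hq b').mp (by rw [← h]; exact (hq' b').mpr (Or.inr rfl))
        rcases hb' with h2 | h2
        · exact ⟨haa, by rw [hba', ← haa, h2]⟩
        · exact ⟨haa, h2.symm⟩
    · have hb : b = a' ∨ b = b' := (hq' b).mp (by rw [← hqq]; exact (hq b).mpr (Or.inr rfl))
      rcases hb with h | h
      · have hb' : b' = a ∨ b' = b := (hq b').mp (by rw [hqq]; exact (hq' b').mpr (Or.inr rfl))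
        rcases hb' with h2 | h2
        · exact ⟨haa, by rw [h, ← haa, h2]⟩
        · exact ⟨haa, h2.symm⟩
      · exact ⟨haa, h⟩
  · have haa' : a' = a := (hp a').mp (by rw [hpq]; exact (hq' a').mpr (Or.inl rfl))
    have hb'a : b' = a := (hp b').mp (by rw [hpq]; exact (hq' b').mpr (Or.inr rfl))
    refine ⟨haa'.symm, ?_⟩
    rcases (key q).mp (Or.inr rfl) with hqp | hqq
    · have hba' : b = a' := (hp' b).mp (by rw [← hqp]; exact (hq b).mpr (Or.inr rfl))
      rw [hba', haa', hb'a]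
    · have hb : b = a' ∨ b = b' := (hq' b).mp (by rw [← hqq]; exact (hq b).mpr (Or.inr rfl))
      rcases hb with h | h
      · rw [h, haa', hb'a]
      · exact h

theorem KP_exists (hpair : ∀ a b : M, ∃ y, ∀ x, mem x y ↔ x = a ∨ x = b)
    (a b : M) : ∃ z, KP mem z a b := by
  obtain ⟨p, hp⟩ := hpair a a
  obtain ⟨q, hq⟩ := hpair a b
  obtain ⟨z, hz⟩ := hpair p q
  exact ⟨z, p, q, ⟨fun x => (hp x).trans (or_self_iff), hq⟩, hz⟩

section Main

variable {aM bM hpM hmM : M}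

theorem charHp
    (hext : ∀ y z : M, (∀ x, mem x y ↔ mem x z) → y = z)
    (hpair : ∀ a b : M, ∃ y, ∀ x, mem x y ↔ x = a ∨ x = b)
    (hA : ∀ x, mem x aM ↔ ∃ v w, KP mem x v w ∧ (mem w w ∨ EqExt mem w v))
    (hHp : ∀ x, mem x hpM ↔ ∃ z, KP mem z aM x ∧ mem z aM) :
    ∀ x, mem x hpM ↔ (mem x x ∨ x = hpM) := by
  intro x
  constructor
  · intro hx
    obtain ⟨z, hzp, hza⟩ := (hHp x).mp hx
    obtain ⟨v, w, hzvw, hor⟩ := (hA z).mp hza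
    obtain ⟨hva, hwx⟩ := KP_inj hzp hzvw
    subst hva; subst hwx
    rcases hor with h | h
    · exact Or.inl h
    · exact Or.inr (hext x hpM fun u => (h u).trans (hHp u).symm)
  · intro h
    obtain ⟨z, hz⟩ := KP_exists hpair aM x
    refine (hHp x).mpr ⟨z, hz, (hA z).mpr ⟨aM, x, hz, ?_⟩⟩
    rcases h with h | h
    · exact Or.inl h
    · subst h; exact Or.inr fun u => hHp u

theorem charHm
    (hext : ∀ y z : M, (∀ x, mem x y ↔ mem x z) → y = z)
    (hpair : ∀ a b : M, ∃ y, ∀ x, mem x y ↔ x = a ∨ x = b)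
    (hB : ∀ x, mem x bM ↔ ∃ v w, KP mem x v w ∧ (mem w w ∧ ¬ EqExt mem w v))
    (hHm : ∀ x, mem x hmM ↔ ∃ z, KP mem z bM x ∧ mem z bM) :
    ∀ x, mem x hmM ↔ (mem x x ∧ x ≠ hmM) := by
  intro x
  constructor
  · intro hx
    obtain ⟨z, hzp, hzb⟩ := (hHm x).mp hx
    obtain ⟨v, w, hzvw, hmem, hne⟩ := (hB z).mp hzb
    obtain ⟨hva, hwx⟩ := KP_inj hzp hzvw
    subst hva; subst hwx
    refine ⟨hmem, ?_⟩
    rintro rfl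
    exact hne fun u => hHm u
  · rintro ⟨hxx, hne⟩
    obtain ⟨z, hz⟩ := KP_exists hpair bM x
    exact (hHm x).mpr ⟨z, hz, (hB z).mpr ⟨bM, x, hz, hxx,
      fun hE => hne (hext x hmM fun u => (hE u).trans (hHm u).symm)⟩⟩

end Main
end Abstract

section Bridge

variable {M : Type*} [L.Structure M]

@[simp] lemma cast3 {n : ℕ} (i : Fin n) (h1 h2 h3) :
    (((Fin.castAdd 3 i).castPred h1).castPred h2).castPred h3 = i := rfl

@[simp] lemma funMap_eta (c : L.Constants) (f : Fin 0 → M) :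
    Structure.funMap c f = (c : M) := congrArg _ (Subsingleton.elim _ _)

end Bridge

set_option maxHeartbeats 2000000 in
/-- In `T_H` the membership characterizations of `H⁺` and `H⁻` are provable:
`T_H ⊨ ∀x(x∈H⁺ ↔ (x∈x ∨ x=H⁺))` and `T_H ⊨ ∀x(x∈H⁻ ↔ (x∈x ∧ x≠H⁻))`. -/
theorem TH_characterizations :
    (TH ⊨ᵇ ((∀' (memF (&0) (Constants.term cHp) ⇔
        (memF (&0) (&0) ⊔ ((&0) =' (Constants.term cHp))))) : L.Sentence)) ∧
    (TH ⊨ᵇ ((∀' (memF (&0) (Constants.term cHm) ⇔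
        (memF (&0) (&0) ⊓ ∼((&0) =' (Constants.term cHm))))) : L.Sentence)) := by
  constructor <;> intro M v xs <;>
  · have hext := TH.realize_sentence_of_mem (M := M) (show extAx ∈ TH by simp [TH])
    have hpair := TH.realize_sentence_of_mem (M := M) (show pairAx ∈ TH by simp [TH])
    have hA := TH.realize_sentence_of_mem (M := M) (show axA ∈ TH by simp [TH])
    have hB := TH.realize_sentence_of_mem (M := M) (show axB ∈ TH by simp [TH])
    have hHp := TH.realize_sentence_of_mem (M := M) (show axHp ∈ TH by simp [TH])
    have hHm := TH.realize_sentence_of_mem (M := M) (show axHm ∈ TH by simp [TH])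
    simp +decide [-not_forall, extAx, pairAx, axA, axB, axHp, axHm, wEqExtractF, isPairF,
      memF, tl, Sentence.Realize, Formula.Realize, Fin.snoc,
      funMap_eq_coe_constants] at hext hpair hA hB hHp hHm ⊢
    first
    | exact charHp (mem := fun x y => Structure.RelMap memRel ![x, y]) hext hpair hA hHp
    | exact charHm (mem := fun x y => Structure.RelMap memRel ![x, y]) hext hpair hB hHm

end CoRussellParadox
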